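/- arXiv:1505.02415 — 7 statements merged into one kernel-verified Lean document; each statement's English description precedes it below -/
import Mathlib

section
/- A point (s,p) ∈ ℂ² lies in the symmetrized bidisc Γ = {(z+w, zw) : |z| ≤ 1, |w| ≤ 1} if and only if |s| ≤ 2 and |s - conj(s)·p| ≤ 1 - |p|². -/
open Complex ComplexConjugate

/-- The symmetrized bidisc. -/
def symGamma : Set (ℂ × ℂ) :=
  {x | ∃ z w : ℂ, ‖z‖ ≤ 1 ∧ ‖w‖ ≤ 1 ∧ x = (z + w, z * w)}

private lemma key_id (z w : ℂ) :
    (z + w) - conj (z + w) * (z * w)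
      = z * ((1 - ‖w‖ ^ 2 : ℝ) : ℂ) + w * ((1 - ‖z‖ ^ 2 : ℝ) : ℂ) := by
  have hw : ((1 - ‖w‖ ^ 2 : ℝ) : ℂ) = 1 - w * conj w := by
    push_cast
    rw [Complex.mul_conj, ← Complex.sq_norm]
    push_cast
    ring
  have hz : ((1 - ‖z‖ ^ 2 : ℝ) : ℂ) = 1 - z * conj z := by
    push_cast
    rw [Complex.mul_conj, ← Complex.sq_norm]
    push_cast
    ring
  rw [hw, hz, map_add]
  ring

private lemma aux_le (z w : ℂ) (hle : ‖w‖ ≤ ‖z‖)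
    (hs2 : ‖z + w‖ ≤ 2)
    (h : ‖(z + w) - conj (z + w) * (z * w)‖ ≤ 1 - ‖z * w‖ ^ 2) :
    ‖z‖ ≤ 1 := by
  by_contra ha1
  push_neg at ha1
  set a := ‖z‖ with ha
  set b := ‖w‖ with hb
  have ha0 : 0 ≤ a := norm_nonneg z
  have hb0 : 0 ≤ b := norm_nonneg w
  have hpb : ‖z * w‖ = a * b := by rw [norm_mul]
  rw [hpb] at h
  have h0 : 0 ≤ 1 - (a * b) ^ 2 := le_trans (norm_nonneg _) h
  have hab1 : a * b ≤ 1 := by nlinarith [mul_nonneg ha0 hb0]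
  have hb1 : b < 1 := by nlinarith
  -- reverse triangle inequality
  have hX : ‖z * ((1 - b ^ 2 : ℝ) : ℂ)‖ = a * (1 - b ^ 2) := by
    rw [norm_mul, Complex.norm_real, Real.norm_eq_abs, _root_.abs_of_nonneg (by nlinarith)]
  have hY : ‖w * ((1 - a ^ 2 : ℝ) : ℂ)‖ = b * (a ^ 2 - 1) := by
    rw [norm_mul, Complex.norm_real, Real.norm_eq_abs, _root_.abs_of_nonpos (by nlinarith)]
    ring
  have htri : a * (1 - b ^ 2) - b * (a ^ 2 - 1)
      ≤ ‖(z + w) - conj (z + w) * (z * w)‖ := by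
    rw [key_id]
    have h1 : ‖z * ((1 - b ^ 2 : ℝ) : ℂ)‖
        ≤ ‖z * ((1 - b ^ 2 : ℝ) : ℂ) + w * ((1 - a ^ 2 : ℝ) : ℂ)‖
          + ‖w * ((1 - a ^ 2 : ℝ) : ℂ)‖ := by
      have h2 := norm_add_le
        (z * ((1 - b ^ 2 : ℝ) : ℂ) + w * ((1 - a ^ 2 : ℝ) : ℂ)) (-(w * ((1 - a ^ 2 : ℝ) : ℂ)))
      rwa [add_neg_cancel_right, norm_neg] at h2
    rw [hX, hY] at h1
    linarith
  have htot : a * (1 - b ^ 2) - b * (a ^ 2 - 1) ≤ 1 - (a * b) ^ 2 := le_trans htri h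
  have hP : 0 < (a - 1) * (1 - b) := mul_pos (by linarith) (by linarith)
  have hfac : (a - 1) * (1 - b) * (1 - a * b) ≤ 0 := by nlinarith [htot]
  have hab : a * b = 1 := by
    refine le_antisymm hab1 ?_
    by_contra hlt
    push_neg at hlt
    have : 0 < (a - 1) * (1 - b) * (1 - a * b) := mul_pos hP (by linarith)
    linarith
  have hz0 : (z + w) - conj (z + w) * (z * w) = 0 := by
    have h' : ‖(z + w) - conj (z + w) * (z * w)‖ ≤ 0 := by
      rw [hab] at h; simpa using h
    have := le_antisymm h' (norm_nonneg _)
    exact norm_eq_zero.mp this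
  rw [key_id] at hz0
  push_cast at hz0
  have hseq : (z + w) * (((a : ℂ)) ^ 2 - 1) = z * ((a : ℂ) ^ 2 - (b : ℂ) ^ 2) := by
    linear_combination -hz0
  have habs : ‖z + w‖ * (a ^ 2 - 1) = a * (a ^ 2 - b ^ 2) := by
    have := congrArg norm hseq
    rw [norm_mul, norm_mul] at this
    have e1 : ‖(a : ℂ) ^ 2 - 1‖ = a ^ 2 - 1 := by
      rw [show ((a : ℂ) ^ 2 - 1) = ((a ^ 2 - 1 : ℝ) : ℂ) by push_cast; ring,
        Complex.norm_real, Real.norm_eq_abs, _root_.abs_of_nonneg (by nlinarith)]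
    have e2 : ‖(a : ℂ) ^ 2 - (b : ℂ) ^ 2‖ = a ^ 2 - b ^ 2 := by
      rw [show ((a : ℂ) ^ 2 - (b : ℂ) ^ 2) = ((a ^ 2 - b ^ 2 : ℝ) : ℂ) by push_cast; ring,
        Complex.norm_real, Real.norm_eq_abs, _root_.abs_of_nonneg (by nlinarith)]
    rw [e1, e2] at this
    exact this
  nlinarith [habs, hs2, hab, ha1, norm_nonneg (z + w),
    mul_pos (mul_pos (sub_pos.2 ha1) (sub_pos.2 ha1)) (sub_pos.2 ha1)]

theorem mem_Gamma_iff (s p : ℂ) :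
    (s, p) ∈ symGamma ↔
      ‖s‖ ≤ 2 ∧ ‖s - conj s * p‖ ≤ 1 - ‖p‖ ^ 2 := by
  constructor
  · rintro ⟨z, w, hz, hw, hx⟩
    rw [Prod.ext_iff] at hx
    obtain ⟨hs, hp⟩ := hx
    simp only at hs hp
    subst hs hp
    have ha0 : 0 ≤ ‖z‖ := norm_nonneg z
    have hb0 : 0 ≤ ‖w‖ := norm_nonneg w
    constructor
    · calc ‖z + w‖ ≤ ‖z‖ + ‖w‖ := norm_add_le z w
        _ ≤ 2 := by linarith
    · set a := ‖z‖
      set b := ‖w‖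
      rw [key_id, norm_mul]
      have hX : ‖z * ((1 - b ^ 2 : ℝ) : ℂ)‖ = a * (1 - b ^ 2) := by
        rw [norm_mul, Complex.norm_real, Real.norm_eq_abs, _root_.abs_of_nonneg (by nlinarith)]
      have hY : ‖w * ((1 - a ^ 2 : ℝ) : ℂ)‖ = b * (1 - a ^ 2) := by
        rw [norm_mul, Complex.norm_real, Real.norm_eq_abs, _root_.abs_of_nonneg (by nlinarith)]
      calc ‖z * ((1 - b ^ 2 : ℝ) : ℂ) + w * ((1 - a ^ 2 : ℝ) : ℂ)‖
          ≤ a * (1 - b ^ 2) + b * (1 - a ^ 2) := by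
            rw [← hX, ← hY]; exact norm_add_le _ _
        _ ≤ 1 - (a * b) ^ 2 := by
            nlinarith [mul_nonneg (mul_nonneg (by linarith : (0:ℝ) ≤ 1 - a)
              (by linarith : (0:ℝ) ≤ 1 - b)) (by nlinarith : (0:ℝ) ≤ 1 - a * b)]
  · rintro ⟨hs2, h⟩
    obtain ⟨c, hc⟩ := IsAlgClosed.exists_pow_nat_eq (s ^ 2 - 4 * p) (n := 2) (by norm_num)
    set z := (s + c) / 2 with hzdef
    set w := (s - c) / 2 with hwdef
    have hsum : z + w = s := by rw [hzdef, hwdef]; ring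
    have hprod : z * w = p := by
      rw [hzdef, hwdef]
      field_simp
      linear_combination (-1 : ℂ) * hc
    rcases le_total (‖w‖) (‖z‖) with hle | hle
    · have hz1 : ‖z‖ ≤ 1 := by
        apply aux_le z w hle
        · rw [hsum]; exact hs2
        · rw [hsum, hprod]; exact h
      exact ⟨z, w, hz1, le_trans hle hz1, by rw [hsum, hprod]⟩
    · have hsum' : w + z = s := by rw [add_comm]; exact hsum
      have hprod' : w * z = p := by rw [mul_comm]; exact hprod
      have hw1 : ‖w‖ ≤ 1 := by
        apply aux_le w z hle
        · rw [hsum']; exact hs2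
        · rw [hsum', hprod']; exact h
      exact ⟨z, w, le_trans hle hw1, hw1, by rw [hsum, hprod]⟩
end

section
/- A point (s,p) ∈ ℂ² lies in the set bΓ = {(z+w, zw) : |z| = |w| = 1} if and only if |s| ≤ 2, |p| = 1, and s - conj(s)·p = 0. -/
open Complex ComplexConjugate

/-- The distinguished boundary of the symmetrized bidisc. -/
def bGamma : Set (ℂ × ℂ) :=
  {x | ∃ z w : ℂ, ‖z‖ = 1 ∧ ‖w‖ = 1 ∧ x = (z + w, z * w)}

theorem mem_bGamma_iff (s p : ℂ) :
    (s, p) ∈ bGamma ↔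
      ‖s‖ ≤ 2 ∧ ‖p‖ = 1 ∧ s - conj s * p = 0 := by
  constructor
  · rintro ⟨z, w, hz, hw, h⟩
    have hs : s = z + w := congrArg Prod.fst h
    have hp : p = z * w := congrArg Prod.snd h
    have hz1 : conj z * z = 1 := by
      rw [mul_comm, Complex.mul_conj, Complex.normSq_eq_norm_sq, hz]; norm_num
    have hw1 : conj w * w = 1 := by
      rw [mul_comm, Complex.mul_conj, Complex.normSq_eq_norm_sq, hw]; norm_num
    refine ⟨?_, ?_, ?_⟩
    · calc ‖s‖ ≤ ‖z‖ + ‖w‖ := hs ▸ norm_add_le z w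
        _ = 2 := by rw [hz, hw]; norm_num
    · rw [hp, norm_mul, hz, hw]; norm_num
    · rw [hs, hp, map_add]
      have : (conj z + conj w) * (z * w) = (conj z * z) * w + (conj w * w) * z := by ring
      rw [this, hz1, hw1]; ring
  · rintro ⟨hs2, hp1, hsp⟩
    set μ : ℂ := Complex.exp ((Complex.arg p / 2 : ℝ) * Complex.I) with hμdef
    have hμabs : ‖μ‖ = 1 := Complex.norm_exp_ofReal_mul_I _
    have hμsq : μ * μ = p := by
      have h1 := Complex.norm_mul_exp_arg_mul_I p
      rw [hp1, Complex.ofReal_one, one_mul] at h1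
      rw [hμdef, ← Complex.exp_add]
      have h2 : (↑(p.arg/2) * Complex.I + ↑(p.arg/2) * Complex.I) = ↑p.arg * Complex.I := by
        push_cast; ring
      rw [h2, h1]
    have hμconj : conj μ * μ = 1 := by
      rw [mul_comm, Complex.mul_conj, Complex.normSq_eq_norm_sq, hμabs]; norm_num
    -- t = s * conj μ is real
    set t : ℂ := s * conj μ with htdef
    have hsreal : s = conj s * p := by linear_combination hsp
    have htconj : conj t = t := by
      rw [htdef, map_mul, Complex.conj_conj]
      calc conj s * μ = conj s * (μ * μ) * conj μ := by
            linear_combination (-(conj s * μ)) * hμconj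
        _ = s * conj μ := by rw [hμsq, ← hsreal]
    have htre : (t.re : ℂ) = t := Complex.conj_eq_iff_re.mp htconj
    set a : ℝ := t.re with hadef
    have hta : ‖t‖ ≤ 2 := by
      rw [htdef, norm_mul, Complex.norm_conj, hμabs, mul_one]; exact hs2
    have ha2 : |a| ≤ 2 := by
      calc |a| = ‖(t.re : ℂ)‖ := by rw [Complex.norm_real, Real.norm_eq_abs]
        _ = ‖t‖ := by rw [htre]
        _ ≤ 2 := hta
    have hb0 : (0:ℝ) ≤ 1 - (a/2)^2 := by
      have : a^2 ≤ 4 := by nlinarith [abs_nonneg a, _root_.sq_abs a]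
      nlinarith
    set b : ℝ := Real.sqrt (1 - (a/2)^2) with hbdef
    have hbsq : b^2 = 1 - (a/2)^2 := Real.sq_sqrt hb0
    refine ⟨μ * ((a/2 : ℝ) + (b : ℝ) * Complex.I), μ * ((a/2 : ℝ) - (b : ℝ) * Complex.I), ?_, ?_, ?_⟩
    · rw [norm_mul, hμabs, one_mul]
      rw [Complex.norm_add_mul_I]
      rw [hbsq]; rw [show (a/2)^2 + (1 - (a/2)^2) = 1 by ring, Real.sqrt_one]
    · rw [norm_mul, hμabs, one_mul]
      have : ((a/2 : ℝ) : ℂ) - (b:ℝ) * Complex.I = ((a/2 :ℝ):ℂ) + ((-b : ℝ):ℂ) * Complex.I := by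
        push_cast; ring
      rw [this, Complex.norm_add_mul_I]
      rw [show (a/2)^2 + (-b)^2 = (a/2)^2 + b^2 by ring, hbsq]
      rw [show (a/2)^2 + (1 - (a/2)^2) = 1 by ring, Real.sqrt_one]
    · have hsum : s = μ * (a : ℂ) := by
        have : t * μ = s * (conj μ * μ) := by rw [htdef]; ring
        rw [hμconj, mul_one] at this
        rw [← this, ← htre]; ring
      have hib : ((b:ℂ) * Complex.I) * ((b:ℂ) * Complex.I) = -(b^2 : ℝ) := by
        push_cast
        rw [mul_assoc, mul_comm Complex.I, mul_assoc, Complex.I_mul_I]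
        ring
      refine Prod.ext ?_ ?_
      · show s = μ * (↑(a/2) + ↑b * Complex.I) + μ * (↑(a/2) - ↑b * Complex.I)
        rw [hsum]; push_cast; ring
      · show p = μ * (↑(a/2) + ↑b * Complex.I) * (μ * (↑(a/2) - ↑b * Complex.I))
        have expand : μ * (↑(a/2) + ↑b * Complex.I) * (μ * (↑(a/2) - ↑b * Complex.I))
            = μ * μ * ((↑(a/2))^2 - ((b:ℂ) * Complex.I) * ((b:ℂ) * Complex.I)) := by ring
        rw [expand, hib, hμsq]
        have : ((↑(a/2) : ℂ))^2 - (-(b^2 : ℝ) : ℂ) = (((a/2)^2 + b^2 : ℝ) : ℂ) := by push_cast; ring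
        rw [this, hbsq]
        norm_num
end

section
/- Let a, b, c, d, s₀, p₀ ∈ ℂ with |p₀| = 1, s₀ = conj(s₀)·p₀, s₀·c ≠ 2d, and |s₀| < 2. Define s = 2(2p₀c − s₀d)/(s₀c − 2d). Then |s| ≤ 2 if and only if |c| ≤ |d|. -/
open Complex ComplexConjugate

theorem abs_s_le_two_iff (a b c d s₀ p₀ : ℂ)
    (hp₀ : ‖p₀‖ = 1) (hs₀p₀ : s₀ = conj s₀ * p₀)
    (hcd : s₀ * c ≠ 2 * d) (hs₀ : ‖s₀‖ < 2)
    (s : ℂ) (hs : s = 2 * (2 * p₀ * c - s₀ * d) / (s₀ * c - 2 * d)) :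
    ‖s‖ ≤ 2 ↔ ‖c‖ ≤ ‖d‖ := by
  set A := 2 * p₀ * c - s₀ * d with hA
  set B := s₀ * c - 2 * d with hB
  have hBne : B ≠ 0 := sub_ne_zero.mpr hcd
  have h1 : p₀ * conj p₀ = 1 := by
    rw [Complex.mul_conj]
    norm_cast
    rw [Complex.normSq_eq_norm_sq, hp₀]; norm_num
  have h2 : p₀ * conj s₀ = s₀ := by rw [mul_comm]; exact hs₀p₀.symm
  have h3 : conj p₀ * s₀ = conj s₀ := by
    have := congrArg (starRingEnd ℂ) hs₀p₀
    simpa [mul_comm] using this.symm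
  have key : A * conj A - B * conj B
      = (4 - s₀ * conj s₀) * (c * conj c - d * conj d) := by
    simp only [hA, hB, map_sub, map_mul, map_ofNat]
    linear_combination (4 * c * conj c) * h1 - (2 * c * conj d) * h2
      - (2 * conj c * d) * h3
  have keyR : Complex.normSq A - Complex.normSq B
      = (4 - Complex.normSq s₀) * (Complex.normSq c - Complex.normSq d) := by
    have := key
    rw [Complex.mul_conj, Complex.mul_conj, Complex.mul_conj, Complex.mul_conj,
      Complex.mul_conj] at this
    exact_mod_cast this
  have hpos : 0 < 4 - Complex.normSq s₀ := by
    have : Complex.normSq s₀ < 4 := by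
      rw [Complex.normSq_eq_norm_sq]
      nlinarith [norm_nonneg s₀]
    linarith
  have hBpos : 0 < ‖B‖ := norm_pos_iff.mpr hBne
  rw [hs, norm_div, norm_mul]
  simp only [Complex.norm_ofNat]
  rw [div_le_iff₀ hBpos]
  constructor
  · intro h
    have hAB : ‖A‖ ≤ ‖B‖ := by linarith
    have : Complex.normSq A ≤ Complex.normSq B := by
      rw [Complex.normSq_eq_norm_sq, Complex.normSq_eq_norm_sq]
      exact pow_le_pow_left₀ (norm_nonneg A) hAB 2
    have hcd2 : Complex.normSq c ≤ Complex.normSq d := by nlinarith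
    rw [Complex.normSq_eq_norm_sq, Complex.normSq_eq_norm_sq] at hcd2
    nlinarith [norm_nonneg c, norm_nonneg d]
  · intro h
    have hcd2 : Complex.normSq c ≤ Complex.normSq d := by
      rw [Complex.normSq_eq_norm_sq, Complex.normSq_eq_norm_sq]
      exact pow_le_pow_left₀ (norm_nonneg c) h 2
    have hAB2 : Complex.normSq A ≤ Complex.normSq B := by nlinarith
    have hAB : ‖A‖ ≤ ‖B‖ := by
      rw [Complex.normSq_eq_norm_sq, Complex.normSq_eq_norm_sq] at hAB2
      nlinarith [norm_nonneg A, norm_nonneg B]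
    linarith
end

section
/- Let h = (s, p) be a rational Γ-inner function and σ ∈ 𝕋 a royal node of h, i.e. s(σ)² = 4p(σ). Then σ is a zero of the rational function s² − 4p of multiplicity at least 2, that is, (s² − 4p)(σ) = 0 and (s² − 4p)'(σ) = 0. -/
open Complex ComplexConjugate

theorem royal_node_double_zero (s p : ℂ → ℂ)
    (hs : ∀ z : ℂ, ‖z‖ = 1 → DifferentiableAt ℂ s z)
    (hp : ∀ z : ℂ, ‖z‖ = 1 → DifferentiableAt ℂ p z)
    (hb : ∀ z : ℂ, ‖z‖ = 1 →
      ‖s z‖ ≤ 2 ∧ ‖p z‖ = 1 ∧ s z = conj (s z) * p z)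
    (σ : ℂ) (hσ : ‖σ‖ = 1) (hroyal : (s σ) ^ 2 = 4 * p σ) :
    (fun z => (s z) ^ 2 - 4 * p z) σ = 0 ∧
      deriv (fun z => (s z) ^ 2 - 4 * p z) σ = 0 := by
  set f : ℂ → ℂ := fun z => (s z) ^ 2 - 4 * p z with hf
  have hfσ : f σ = 0 := by simp [hf, hroyal]
  refine ⟨hfσ, ?_⟩
  obtain ⟨θ₀, hθ₀⟩ : ∃ θ : ℝ, Complex.exp (θ * Complex.I) = σ :=
    (Complex.norm_eq_one_iff σ).mp hσ
  set c : ℝ → ℂ := fun θ => Complex.exp (θ * Complex.I) with hc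
  have habs : ∀ θ : ℝ, ‖c θ‖ = 1 := by
    intro θ; simp [hc, Complex.norm_exp]
  -- derivative of c
  have hcD : ∀ θ : ℝ, HasDerivAt c (Complex.I * c θ) θ := by
    intro θ
    have h1 : HasDerivAt (fun w : ℂ => Complex.exp (w * Complex.I))
        (Complex.exp ((θ : ℂ) * Complex.I) * Complex.I) (θ : ℂ) := by
      exact (Complex.hasDerivAt_exp ((θ : ℂ) * Complex.I)).comp (θ : ℂ)
        (by simpa using (hasDerivAt_id (θ : ℂ)).mul_const Complex.I)
    simpa [hc, mul_comm] using h1.comp_ofReal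
  -- derivative of f at σ
  have hfd : DifferentiableAt ℂ f σ :=
    ((hs σ hσ).pow 2).sub ((hp σ hσ).const_mul 4)
  set d : ℂ := deriv f σ with hd
  have hfD : HasDerivAt f d σ := hfd.hasDerivAt
  -- φ : the boundary function
  set φ : ℝ → ℂ := fun θ => -(conj (p (c θ))) * f (c θ) with hφ
  -- φ is real on the circle
  have hφreal : ∀ θ : ℝ, φ θ = ((4 - (‖s (c θ)‖) ^ 2 : ℝ) : ℂ) := by
    intro θ
    obtain ⟨h1, h2, h3⟩ := hb (c θ) (habs θ)
    have hps : conj (p (c θ)) * (s (c θ)) ^ 2 = ((‖s (c θ)‖) ^ 2 : ℝ) := by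
      have : conj (p (c θ)) * (s (c θ)) ^ 2
          = (conj (p (c θ)) * p (c θ)) * (conj (s (c θ)) * s (c θ)) := by
        nth_rewrite 1 [pow_two]
        nth_rewrite 1 [h3]
        ring
      rw [this, Complex.conj_mul', Complex.conj_mul']
      simp only [h2]
      push_cast
      ring
    have hpp : conj (p (c θ)) * p (c θ) = 1 := by
      rw [Complex.conj_mul']
      simp [h2]
    have : φ θ = conj (p (c θ)) * p (c θ) * 4 - conj (p (c θ)) * (s (c θ)) ^ 2 := by
      simp only [hφ, hf]; ring
    rw [this, hpp, hps]
    push_cast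
    ring
  have hcθ₀ : c θ₀ = σ := hθ₀
  -- derivative of φ at θ₀
  have hpcD : HasDerivAt (fun θ : ℝ => p (c θ)) ((Complex.I * σ) • deriv p σ) θ₀ := by
    have := HasDerivAt.scomp (𝕜 := ℝ) (𝕜' := ℂ) θ₀
      (by rw [hcθ₀]; exact (hp σ hσ).hasDerivAt) (hcD θ₀)
    simpa [Function.comp_def, hcθ₀] using this
  have hfcD : HasDerivAt (fun θ : ℝ => f (c θ)) ((Complex.I * σ) • d) θ₀ := by
    have := HasDerivAt.scomp (𝕜 := ℝ) (𝕜' := ℂ) θ₀ (by rw [hcθ₀]; exact hfD) (hcD θ₀)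
    simpa [Function.comp_def, hcθ₀] using this
  have hφD : HasDerivAt φ
      (-(conj ((Complex.I * σ) • deriv p σ)) * f (c θ₀)
        + -(conj (p (c θ₀))) * ((Complex.I * σ) • d)) θ₀ := by
    exact (hpcD.star.neg).mul hfcD
  set D : ℂ := -(conj ((Complex.I * σ) • deriv p σ)) * f (c θ₀)
        + -(conj (p (c θ₀))) * ((Complex.I * σ) • d) with hD
  have hDval : D = -(conj (p σ)) * (Complex.I * σ * d) := by
    rw [hD, hcθ₀, hfσ]
    simp only [smul_eq_mul, mul_zero, zero_add]
  -- real part has a local min at θ₀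
  have hψD : HasDerivAt (fun θ : ℝ => (φ θ).re) D.re θ₀ :=
    (Complex.reCLM.hasFDerivAt.comp_hasDerivAt θ₀ hφD)
  have hφθ₀ : φ θ₀ = 0 := by
    show -(conj (p (c θ₀))) * f (c θ₀) = 0
    rw [hcθ₀, hfσ]; ring
  have hmin : IsLocalMin (fun θ : ℝ => (φ θ).re) θ₀ :=
    Filter.Eventually.of_forall fun θ => by
      simp only [hφθ₀, hφreal θ, Complex.ofReal_re, Complex.zero_re]
      have h1 := (hb (c θ) (habs θ)).1
      nlinarith [norm_nonneg (s (c θ))]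
  have hre : D.re = 0 := hmin.hasDerivAt_eq_zero hψD
  have him : D.im = 0 := by
    have hiD : HasDerivAt (fun θ : ℝ => (φ θ).im) D.im θ₀ :=
      Complex.imCLM.hasFDerivAt.comp_hasDerivAt θ₀ hφD
    have hz : (fun θ : ℝ => (φ θ).im) = fun _ => (0 : ℝ) :=
      funext fun θ => by rw [hφreal θ, Complex.ofReal_im]
    rw [hz] at hiD
    exact hiD.unique (hasDerivAt_const _ _)
  have hD0 : D = 0 := Complex.ext hre him
  rw [hDval] at hD0
  have hpσ : p σ ≠ 0 := by
    intro h; have h2 := (hb σ hσ).2.1; rw [h] at h2; simp at h2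
  have hσ0 : σ ≠ 0 := by
    intro h; rw [h] at hσ; simp at hσ
  simp only [neg_mul, neg_eq_zero, mul_eq_zero, map_eq_zero, Complex.I_ne_zero,
    false_or] at hD0
  tauto
end

section
/- Let a, b, c, d be rational functions (over ℂ) in one variable, let s₀, p₀ ∈ ℂ satisfy s₀² ≠ 4p₀, s₀c ≠ 2d (as rational functions), and s₀a − 2b + 2p₀c − s₀d = 0. Define rational functions s = 2(2p₀c − s₀d)/(s₀c − 2d) and p = (−2p₀a + s₀b)/(s₀c − 2d), and for a variable ω let ζ(ω) = (2ωp₀ − s₀)/(2 − ωs₀). Then, as rational functions in (ω, λ), (2ω·p(λ) − s(λ))/(2 − ω·s(λ)) = (a(λ)·ζ(ω) + b(λ))/(c(λ)·ζ(ω) + d(λ)). -/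
open Complex ComplexConjugate

theorem lin_frac_identity (a b c d s₀ p₀ ω : ℂ)
    (h4p : s₀ ^ 2 ≠ 4 * p₀) (hcd : s₀ * c ≠ 2 * d)
    (hlin : s₀ * a - 2 * b + 2 * p₀ * c - s₀ * d = 0)
    (s p ζ : ℂ)
    (hs : s = 2 * (2 * p₀ * c - s₀ * d) / (s₀ * c - 2 * d))
    (hp : p = (-2 * p₀ * a + s₀ * b) / (s₀ * c - 2 * d))
    (hζ : ζ = (2 * ω * p₀ - s₀) / (2 - ω * s₀))
    (hden₁ : 2 - ω * s₀ ≠ 0) (hden₂ : 2 - ω * s ≠ 0) (hden₃ : c * ζ + d ≠ 0) :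
    (2 * ω * p - s) / (2 - ω * s) = (a * ζ + b) / (c * ζ + d) := by
  have hD : s₀ * c - 2 * d ≠ 0 := sub_ne_zero.mpr hcd
  have hs' : s * (s₀ * c - 2 * d) = 2 * (2 * p₀ * c - s₀ * d) := by
    rw [hs]; exact div_mul_cancel₀ _ hD
  have hp' : p * (s₀ * c - 2 * d) = -2 * p₀ * a + s₀ * b := by
    rw [hp]; field_simp
  have hζ' : ζ * (2 - ω * s₀) = 2 * ω * p₀ - s₀ := by
    rw [hζ]; field_simp
  rw [div_eq_div_iff hden₂ hden₃]
  have key : ((2 * ω * p - s) * (c * ζ + d) - (a * ζ + b) * (2 - ω * s)) *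
      ((s₀ * c - 2 * d) * (2 - ω * s₀)) = 0 := by
    linear_combination (2 * ω * (c * ζ + d) * (2 - ω * s₀)) * hp'
      + ((ω * (a * ζ + b) - (c * ζ + d)) * (2 - ω * s₀)) * hs'
      + (-2 * a * (s₀ * c - 2 * d) - 2 * ω * c * (-2 * p₀ * a + s₀ * b)
          + c * (2 * (2 * p₀ * c - s₀ * d)) - ω * a * (2 * (2 * p₀ * c - s₀ * d))) * hζ'
      + (4 * (-s₀ * (d * a - c * b) * ω + c * (d * s₀ - 2 * c * p₀))) * hζ'
      + (-2 * (c * (2 * ω * p₀ - s₀) + d * (2 - ω * s₀))) * hlin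
  have h := mul_eq_zero.mp key
  rcases h with h | h
  · exact sub_eq_zero.mp h
  · exact absurd h (mul_ne_zero hD hden₁)
end

section
/- Suppose (s₁, p₁) ∈ Γ and there exist two distinct points ω₁, ω₂ ∈ 𝕋 such that |Φ_{ω_i}(s₁, p₁)| = 1 for i = 1, 2, where Φ_ω(s,p) = (2ωp − s)/(2 − ωs). Then (s₁, p₁) ∈ bΓ, i.e. |p₁| = 1 and s₁ = conj(s₁)·p₁. -/
open Complex ComplexConjugate

lemma key_re (ω s p : ℂ) (hω : ‖ω‖ = 1)
    (h : ‖(2 * ω * p - s) / (2 - ω * s)‖ = 1) :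
    (ω * (s - conj s * p)).re = 1 - Complex.normSq p := by
  have hden : (2 - ω * s) ≠ 0 := by
    intro h0; rw [h0, div_zero] at h; simp at h
  have habs : ‖2 * ω * p - s‖ = ‖2 - ω * s‖ := by
    have hd : ‖2 - ω * s‖ ≠ 0 := by
      simpa [sub_eq_zero] using hden
    rw [norm_div] at h
    exact (div_eq_one_iff_eq hd).1 h
  have hn : Complex.normSq (2 * ω * p - s) = Complex.normSq (2 - ω * s) := by
    rw [← Complex.sq_norm, ← Complex.sq_norm, habs]
  have hωn : ω.re ^ 2 + ω.im ^ 2 = 1 := by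
    have h2 := Complex.sq_norm ω
    rw [hω] at h2
    simp [Complex.normSq_apply] at h2
    nlinarith [h2]
  simp only [Complex.normSq_apply, Complex.mul_re, Complex.mul_im, Complex.sub_re,
    Complex.sub_im, Complex.conj_re, Complex.conj_im, Complex.re_ofNat, Complex.im_ofNat] at hn ⊢
  linear_combination (1/4 : ℝ) * hn + ((s.re^2 + s.im^2)/4 - (p.re^2 + p.im^2)) * hωn

theorem mem_bGamma_of_two_Phi_unimodular (s₁ p₁ : ℂ)
    (h : (s₁, p₁) ∈ symGamma) (ω₁ ω₂ : ℂ)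
    (hω₁ : ‖ω₁‖ = 1) (hω₂ : ‖ω₂‖ = 1) (hne : ω₁ ≠ ω₂)
    (h₁ : ‖(2 * ω₁ * p₁ - s₁) / (2 - ω₁ * s₁)‖ = 1)
    (h₂ : ‖(2 * ω₂ * p₁ - s₁) / (2 - ω₂ * s₁)‖ = 1) :
    ‖p₁‖ = 1 ∧ s₁ = conj s₁ * p₁ := by
  obtain ⟨z, w, hz, hw, hx⟩ := h
  have hs : s₁ = z + w := congrArg Prod.fst hx
  have hp : p₁ = z * w := congrArg Prod.snd hx
  set u : ℂ := s₁ - conj s₁ * p₁ with hu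
  -- bound |u| ≤ 1 - normSq p₁
  have hueq : u = z * (1 - (Complex.normSq w : ℂ)) + w * (1 - (Complex.normSq z : ℂ)) := by
    rw [hu, hs, hp]
    rw [← Complex.mul_conj w, ← Complex.mul_conj z]
    rw [map_add]
    ring
  have hnz : Complex.normSq z ≤ 1 := by
    rw [← Complex.sq_norm]; nlinarith [norm_nonneg z]
  have hnw : Complex.normSq w ≤ 1 := by
    rw [← Complex.sq_norm]; nlinarith [norm_nonneg w]
  have hub : ‖u‖ ≤ 1 - Complex.normSq p₁ := by
    have h1 : ‖u‖ ≤ ‖z‖ * (1 - Complex.normSq w)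
        + ‖w‖ * (1 - Complex.normSq z) := by
      rw [hueq]
      refine le_trans (norm_add_le _ _) ?_
      rw [norm_mul, norm_mul]
      have e1 : ‖1 - (Complex.normSq w : ℂ)‖ = 1 - Complex.normSq w := by
        rw [show (1 : ℂ) - (Complex.normSq w : ℂ) = ((1 - Complex.normSq w : ℝ) : ℂ) by push_cast; ring]
        rw [Complex.norm_real, Real.norm_eq_abs, _root_.abs_of_nonneg (by linarith)]
      have e2 : ‖1 - (Complex.normSq z : ℂ)‖ = 1 - Complex.normSq z := by
        rw [show (1 : ℂ) - (Complex.normSq z : ℂ) = ((1 - Complex.normSq z : ℝ) : ℂ) by push_cast; ring]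
        rw [Complex.norm_real, Real.norm_eq_abs, _root_.abs_of_nonneg (by linarith)]
      rw [e1, e2]
    have hpz : Complex.normSq p₁ = Complex.normSq z * Complex.normSq w := by
      rw [hp, map_mul]
    rw [hpz]
    refine le_trans h1 ?_
    have haz := norm_nonneg z
    have haw := norm_nonneg w
    have hz2 := Complex.sq_norm z
    have hw2 := Complex.sq_norm w
    have hab : ‖z‖ * ‖w‖ ≤ 1 := by nlinarith
    nlinarith [hz2, hw2,
      mul_nonneg (mul_nonneg (sub_nonneg.2 hz) (sub_nonneg.2 hw)) (sub_nonneg.2 hab)]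
  -- each ω gives ω * u = 1 - normSq p₁
  have keyc : ∀ ω : ℂ, ‖ω‖ = 1 →
      ‖(2 * ω * p₁ - s₁) / (2 - ω * s₁)‖ = 1 →
      ω * u = ((1 - Complex.normSq p₁ : ℝ) : ℂ) := by
    intro ω hω hΦ
    have hre := key_re ω s₁ p₁ hω hΦ
    have habsu : ‖ω * u‖ = ‖u‖ := by
      rw [norm_mul, hω, one_mul]
    have hle : ‖ω * u‖ ≤ (ω * u).re := by
      rw [habsu, hre]; exact hub
    have hge : (ω * u).re ≤ ‖ω * u‖ := Complex.re_le_norm _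
    have heq : ‖ω * u‖ = (ω * u).re := le_antisymm hle hge
    have him : (ω * u).im = 0 := by
      have h2 : (ω * u).re ^ 2 + (ω * u).im ^ 2 = (ω * u).re ^ 2 := by
        have := Complex.sq_norm (ω * u)
        rw [heq, Complex.normSq_apply] at this
        nlinarith [this]
      nlinarith [h2]
    apply Complex.ext
    · rw [hre]; simp
    · rw [him]; simp
  have e1 := keyc ω₁ hω₁ h₁
  have e2 := keyc ω₂ hω₂ h₂
  have hu0 : u = 0 := by
    have : (ω₁ - ω₂) * u = 0 := by rw [sub_mul, e1, e2, sub_self]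
    rcases mul_eq_zero.1 this with h' | h'
    · exact absurd (sub_eq_zero.1 h') hne
    · exact h'
  have hnp : Complex.normSq p₁ = 1 := by
    rw [hu0, mul_zero] at e1
    have := congrArg Complex.re e1.symm
    simp at this
    linarith
  constructor
  · rw [← Complex.sq_norm] at hnp
    nlinarith [norm_nonneg p₁]
  · exact sub_eq_zero.1 hu0
end

section
/- For ω ∈ 𝕋 and (s,p) ∈ Γ with ωs ≠ 2, define Φ_ω(s,p) = (2ωp − s)/(2 − ωs). Then |Φ_ω(s,p)| ≤ 1. -/
open Complex ComplexConjugate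

lemma key_normSq (a b : ℂ) (ha : Complex.normSq a ≤ 1) (hb : Complex.normSq b ≤ 1) :
    Complex.normSq (2 * a * b - a - b) ≤ Complex.normSq (2 - a - b) := by
  have hid : Complex.normSq (2 - a - b) - Complex.normSq (2 * a * b - a - b) =
      2 * (1 - Complex.normSq a) * Complex.normSq (1 - b) +
      2 * (1 - Complex.normSq b) * Complex.normSq (1 - a) := by
    simp only [Complex.normSq_apply, Complex.sub_re, Complex.sub_im, Complex.mul_re,
      Complex.mul_im, Complex.one_re, Complex.one_im, Complex.re_ofNat, Complex.im_ofNat]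
    ring
  nlinarith [Complex.normSq_nonneg (1 - a), Complex.normSq_nonneg (1 - b)]

lemma key_abs (a b : ℂ) (ha : ‖a‖ ≤ 1) (hb : ‖b‖ ≤ 1) :
    ‖2 * a * b - a - b‖ ≤ ‖2 - a - b‖ := by
  have ha' : Complex.normSq a ≤ 1 := by
    rw [← Complex.sq_norm]; nlinarith [norm_nonneg a]
  have hb' : Complex.normSq b ≤ 1 := by
    rw [← Complex.sq_norm]; nlinarith [norm_nonneg b]
  have := key_normSq a b ha' hb'
  simpa [Complex.norm_def] using Real.sqrt_le_sqrt this

theorem abs_Phi_le_one (ω s p : ℂ) (hω : ‖ω‖ = 1)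
    (h : (s, p) ∈ symGamma) (hden : ω * s ≠ 2) :
    ‖(2 * ω * p - s) / (2 - ω * s)‖ ≤ 1 := by
  obtain ⟨z, w, hz, hw, hx⟩ := h
  obtain ⟨hs, hp⟩ : s = z + w ∧ p = z * w := by
    constructor <;> · have := congrArg Prod.fst hx; have := congrArg Prod.snd hx; simp_all
  have ha : ‖ω * z‖ ≤ 1 := by
    rw [norm_mul, hω, one_mul]; exact hz
  have hb : ‖ω * w‖ ≤ 1 := by
    rw [norm_mul, hω, one_mul]; exact hw
  have key := key_abs (ω * z) (ω * w) ha hb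
  have hnum : ‖2 * ω * p - s‖ = ‖2 * (ω * z) * (ω * w) - ω * z - ω * w‖ := by
    have : 2 * (ω * z) * (ω * w) - ω * z - ω * w = ω * (2 * ω * p - s) := by
      rw [hs, hp]; ring
    rw [this, norm_mul, hω, one_mul]
  have hden' : (2 : ℂ) - ω * s = 2 - ω * z - ω * w := by rw [hs]; ring
  rw [norm_div]
  apply div_le_one_of_le₀
  · rw [hnum, hden']; exact key
  · exact norm_nonneg _
end
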